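/- In the root system of type D_n (n ≥ 4) realized in ℝ^n, the Kostant cascade is: β_i = ε_{2i-1} + ε_{2i} for 1 ≤ i ≤ ⌊(n−1)/2⌋, together with α_{2i-1} = ε_{2i-1} − ε_{2i} for 1 ≤ i ≤ ⌊(n−1)/2⌋ if n is odd; and additionally α_n = ε_{n-1} + ε_n, and α_{2i-1} for 1 ≤ i ≤ n/2, if n is even. -/

import Mathlib

/- Kostant cascade machinery for a root system in a real inner product space. -/

open scoped RealInnerProductSpace

variable {V : Type*} [NormedAddCommGroup V] [InnerProductSpace ℝ V]

/-- Two roots of `Rs` are linked if they are not orthogonal. -/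
def Linked (Rs : Set V) (a b : V) : Prop := a ∈ Rs ∧ b ∈ Rs ∧ ⟪a, b⟫ ≠ 0

/-- `C` is an irreducible component of the root subsystem `Rs` :
it is a connectedness class of the non-orthogonality relation. -/
def IsComponent (Rs : Set V) (C : Set V) : Prop :=
  ∃ a ∈ Rs, C = {b | Relation.ReflTransGen (Linked Rs) a b}

/-- `β` is the highest root of the (irreducible) subsystem `C` of `Rs`
with respect to the positive system `pos`. -/
def IsHighestRoot (Rs pos C : Set V) (β : V) : Prop :=
  β ∈ C ∧ β ∈ pos ∧ ∀ α ∈ C, α ∈ pos → β + α ∉ Rs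

/-- The subsystems occurring in the recursive construction of the Kostant cascade:
irreducible components of `Rs`, and recursively irreducible components of the
orthogonal complement of the highest root of a cascade subsystem. -/
inductive CascadeSub (Rs pos : Set V) : Set V → Prop
  | base (C : Set V) : IsComponent Rs C → CascadeSub Rs pos C
  | step (K C : Set V) (β : V) : CascadeSub Rs pos K → IsHighestRoot Rs pos K β →
      IsComponent {α ∈ K | ⟪α, β⟫ = 0} C → CascadeSub Rs pos C

/-- The Kostant cascade `β_π` : the highest roots of the cascade subsystems. -/
def cascadeSet (Rs pos : Set V) : Set V :=
  {β | ∃ K, CascadeSub Rs pos K ∧ IsHighestRoot Rs pos K β}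

/-- `H_β = {α ∈ Δ_K : (α, β) > 0}` where `Δ_K` is the cascade subsystem with
highest root `β`. -/
def cascadeH (Rs pos : Set V) (β : V) : Set V :=
  {α | ∃ K, CascadeSub Rs pos K ∧ IsHighestRoot Rs pos K β ∧ α ∈ K ∧ 0 < ⟪α, β⟫}

/-- 1-based orthonormal basis vectors `ε_k` of `ℝ^n` (zero out of range). -/
noncomputable def eps (n k : ℕ) : EuclideanSpace ℝ (Fin n) :=
  if h : 1 ≤ k ∧ k ≤ n then EuclideanSpace.single ⟨k - 1, by omega⟩ (1 : ℝ) else 0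

/-- Positive roots of the type `D_n` root system in `ℝ^n`. -/
noncomputable def posD (n : ℕ) : Set (EuclideanSpace ℝ (Fin n)) :=
  {v | ∃ i j, 1 ≤ i ∧ i < j ∧ j ≤ n ∧ (v = eps n i - eps n j ∨ v = eps n i + eps n j)}

/-- The type `D_n` root system in `ℝ^n` : `{±ε_i ± ε_j : i < j}`. -/
noncomputable def rootsD (n : ℕ) : Set (EuclideanSpace ℝ (Fin n)) :=
  posD n ∪ {v | -v ∈ posD n}

lemma inner_eps (n i j : ℕ) :
    ⟪eps n i, eps n j⟫ = if 1 ≤ i ∧ i ≤ n ∧ j = i then (1:ℝ) else 0 := by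
  unfold eps
  split_ifs with h1 h2 h3 h4 h5 h6 h7 <;>
    simp_all [EuclideanSpace.inner_single_left, EuclideanSpace.single_apply] <;>
    (try intro h) <;> omega

/-- normalized root -/
noncomputable def nroot (n i j : ℕ) (s e : ℝ) : EuclideanSpace ℝ (Fin n) :=
  s • (eps n i + e • eps n j)
lemma inner_nroot_nroot (n i j p q : ℕ) (s e t f : ℝ) :
    ⟪nroot n i j s e, nroot n p q t f⟫ =
      s * t * ((if 1 ≤ i ∧ i ≤ n ∧ p = i then (1:ℝ) else 0)
        + f * (if 1 ≤ i ∧ i ≤ n ∧ q = i then (1:ℝ) else 0)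
        + e * (if 1 ≤ j ∧ j ≤ n ∧ p = j then (1:ℝ) else 0)
        + e * f * (if 1 ≤ j ∧ j ≤ n ∧ q = j then (1:ℝ) else 0)) := by
  simp only [nroot, inner_smul_left, inner_smul_right, inner_add_left, inner_add_right,
    inner_eps, RCLike.star_def, conj_trivial]
  ring
lemma inner_eps_nroot (n k p q : ℕ) (t f : ℝ) :
    ⟪eps n k, nroot n p q t f⟫ =
      t * ((if 1 ≤ k ∧ k ≤ n ∧ p = k then (1:ℝ) else 0)
        + f * (if 1 ≤ k ∧ k ≤ n ∧ q = k then (1:ℝ) else 0)) := by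
  simp only [nroot, inner_smul_right, inner_add_right, inner_eps]
lemma nroot_inj {n i j p q : ℕ} {s e t f : ℝ}
    (hi : 1 ≤ i) (hij : i < j) (hjn : j ≤ n)
    (hp : 1 ≤ p) (hpq : p < q) (hqn : q ≤ n)
    (hs : s = 1 ∨ s = -1) (he : e = 1 ∨ e = -1)
    (ht : t = 1 ∨ t = -1) (hf : f = 1 ∨ f = -1)
    (h : nroot n i j s e = nroot n p q t f) :
    i = p ∧ j = q ∧ s = t ∧ e = f := by
  have hs0 : s ≠ 0 := by rcases hs with rfl | rfl <;> norm_num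
  have ht0 : t ≠ 0 := by rcases ht with rfl | rfl <;> norm_num
  have he0 : e ≠ 0 := by rcases he with rfl | rfl <;> norm_num
  have hf0 : f ≠ 0 := by rcases hf with rfl | rfl <;> norm_num
  have Hi := congrArg (fun w => ⟪eps n i, w⟫) h
  simp only [inner_eps_nroot] at Hi
  rw [if_pos (show 1 ≤ i ∧ i ≤ n ∧ True from ⟨hi, by omega, trivial⟩),
      if_neg (show ¬(1 ≤ i ∧ i ≤ n ∧ j = i) by omega)] at Hi
  by_cases hpi : p = i
  · subst hpi
    rw [if_pos (show 1 ≤ p ∧ p ≤ n ∧ p = p from ⟨hp, by omega, rfl⟩),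
        if_neg (show ¬(1 ≤ p ∧ p ≤ n ∧ q = p) by omega)] at Hi
    have hst : s = t := by
      field_simp at Hi; linarith
    have Hj := congrArg (fun w => ⟪eps n j, w⟫) h
    simp only [inner_eps_nroot] at Hj
    rw [if_pos (show 1 ≤ j ∧ j ≤ n ∧ True from ⟨by omega, hjn, trivial⟩)] at Hj
    simp only [if_neg (show ¬(1 ≤ j ∧ j ≤ n ∧ p = j) by omega)] at Hj
    by_cases hqj : q = j
    · rw [if_pos (show 1 ≤ j ∧ j ≤ n ∧ q = j from ⟨by omega, hjn, hqj⟩)] at Hj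
      refine ⟨rfl, hqj.symm, hst, ?_⟩
      subst hst
      field_simp at Hj
      linarith
    · rw [if_neg (show ¬(1 ≤ j ∧ j ≤ n ∧ q = j) by tauto)] at Hj
      exfalso
      field_simp at Hj
      exact mul_ne_zero hs0 he0 (by linarith)
  · by_cases hqi : q = i
    · subst hqi
      exfalso
      have Hp := congrArg (fun w => ⟪eps n p, w⟫) h
      simp only [inner_eps_nroot] at Hp
      rw [if_neg (show ¬(1 ≤ p ∧ p ≤ n ∧ q = p) by omega),
          if_neg (show ¬(1 ≤ p ∧ p ≤ n ∧ j = p) by omega),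
          if_pos (show 1 ≤ p ∧ p ≤ n ∧ True from ⟨hp, by omega, trivial⟩)] at Hp
      field_simp at Hp
      exact ht0 (by linarith)
    · exfalso
      rw [if_neg (show ¬(1 ≤ i ∧ i ≤ n ∧ p = i) by tauto),
          if_neg (show ¬(1 ≤ i ∧ i ≤ n ∧ q = i) by tauto)] at Hi
      field_simp at Hi
      exact hs0 (by linarith)
def Dset (n l : ℕ) : Set (EuclideanSpace ℝ (Fin n)) :=
  {v | ∃ i j s e, l ≤ i ∧ i < j ∧ j ≤ n ∧ (s = (1:ℝ) ∨ s = -1) ∧ (e = (1:ℝ) ∨ e = -1) ∧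
    v = nroot n i j s e}
lemma neg_nroot (n i j : ℕ) (s e : ℝ) : -(nroot n i j s e) = nroot n i j (-s) e := by
  simp only [nroot]; module
lemma mem_posD_iff {n : ℕ} {v : EuclideanSpace ℝ (Fin n)} :
    v ∈ posD n ↔ ∃ i j e, 1 ≤ i ∧ i < j ∧ j ≤ n ∧ (e = (1:ℝ) ∨ e = -1) ∧
      v = nroot n i j 1 e := by
  constructor
  · rintro ⟨i, j, h1, h2, h3, (rfl | rfl)⟩
    · exact ⟨i, j, -1, h1, h2, h3, Or.inr rfl, by simp only [nroot]; module⟩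
    · exact ⟨i, j, 1, h1, h2, h3, Or.inl rfl, by simp only [nroot]; module⟩
  · rintro ⟨i, j, e, h1, h2, h3, (rfl | rfl), rfl⟩
    · exact ⟨i, j, h1, h2, h3, Or.inr (by simp only [nroot]; module)⟩
    · exact ⟨i, j, h1, h2, h3, Or.inl (by simp only [nroot]; module)⟩
lemma rootsD_eq_Dset (n : ℕ) : rootsD n = Dset n 1 := by
  ext v
  constructor
  · rintro (hv | hv)
    · obtain ⟨i, j, e, h1, h2, h3, he, rfl⟩ := mem_posD_iff.1 hv
      exact ⟨i, j, 1, e, h1, h2, h3, Or.inl rfl, he, rfl⟩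
    · obtain ⟨i, j, e, h1, h2, h3, he, hveq⟩ := mem_posD_iff.1 hv
      refine ⟨i, j, -1, e, h1, h2, h3, Or.inr rfl, he, ?_⟩
      rw [← neg_neg v, hveq, neg_nroot]
  · rintro ⟨i, j, s, e, h1, h2, h3, (rfl | rfl), he, rfl⟩
    · exact Or.inl (mem_posD_iff.2 ⟨i, j, e, h1, h2, h3, he, rfl⟩)
    · refine Or.inr (mem_posD_iff.2 ⟨i, j, e, h1, h2, h3, he, ?_⟩)
      rw [neg_nroot]; norm_num
lemma inner_self_nroot {n i j : ℕ} {s e : ℝ} (hi : 1 ≤ i) (hij : i < j) (hjn : j ≤ n)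
    (hs : s = 1 ∨ s = -1) (he : e = 1 ∨ e = -1) :
    ⟪nroot n i j s e, nroot n i j s e⟫ = 2 := by
  rw [inner_nroot_nroot,
    if_pos (show 1 ≤ i ∧ i ≤ n ∧ i = i from ⟨hi, by omega, rfl⟩),
    if_neg (show ¬(1 ≤ i ∧ i ≤ n ∧ j = i) by omega),
    if_neg (show ¬(1 ≤ j ∧ j ≤ n ∧ i = j) by omega),
    if_pos (show 1 ≤ j ∧ j ≤ n ∧ j = j from ⟨by omega, hjn, rfl⟩)]
  rcases hs with rfl | rfl <;> rcases he with rfl | rfl <;> norm_num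
lemma inner_self_mem_Dset {n l : ℕ} {v : EuclideanSpace ℝ (Fin n)} (hl : 1 ≤ l) (hv : v ∈ Dset n l) :
    ⟪v, v⟫ = 2 := by
  obtain ⟨i, j, s, e, h1, h2, h3, hs, he, rfl⟩ := hv
  exact inner_self_nroot (by omega) h2 h3 hs he
lemma inner_nroot_same {n i j : ℕ} {s e t f : ℝ} (hi : 1 ≤ i) (hij : i < j) (hjn : j ≤ n) :
    ⟪nroot n i j s e, nroot n i j t f⟫ = s * t * (1 + e * f) := by
  rw [inner_nroot_nroot,
    if_pos (show 1 ≤ i ∧ i ≤ n ∧ i = i from ⟨hi, by omega, rfl⟩),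
    if_neg (show ¬(1 ≤ i ∧ i ≤ n ∧ j = i) by omega),
    if_neg (show ¬(1 ≤ j ∧ j ≤ n ∧ i = j) by omega),
    if_pos (show 1 ≤ j ∧ j ≤ n ∧ j = j from ⟨by omega, hjn, rfl⟩)]
  ring
lemma inner_nroot_overlap {n i j p q : ℕ} {s e t f : ℝ}
    (hi : 1 ≤ i) (hij : i < j) (hjn : j ≤ n)
    (hp : 1 ≤ p) (hpq : p < q) (hqn : q ≤ n)
    (hs : s = 1 ∨ s = -1) (he : e = 1 ∨ e = -1)
    (ht : t = 1 ∨ t = -1) (hf : f = 1 ∨ f = -1)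
    (hover : (i = p ∧ j ≠ q) ∨ i = q ∨ j = p ∨ (j = q ∧ i ≠ p)) :
    ⟪nroot n i j s e, nroot n p q t f⟫ ≠ 0 := by
  rw [inner_nroot_nroot]
  rcases hover with ⟨h1, h2⟩ | h1 | h1 | ⟨h1, h2⟩
  · rw [if_pos (show 1 ≤ i ∧ i ≤ n ∧ p = i from ⟨hi, by omega, h1.symm⟩),
      if_neg (show ¬(1 ≤ i ∧ i ≤ n ∧ q = i) by omega),
      if_neg (show ¬(1 ≤ j ∧ j ≤ n ∧ p = j) by omega),
      if_neg (show ¬(1 ≤ j ∧ j ≤ n ∧ q = j) by omega)]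
    rcases hs with rfl | rfl <;> rcases ht with rfl | rfl <;> norm_num
  · rw [if_neg (show ¬(1 ≤ i ∧ i ≤ n ∧ p = i) by omega),
      if_pos (show 1 ≤ i ∧ i ≤ n ∧ q = i from ⟨hi, by omega, h1.symm⟩),
      if_neg (show ¬(1 ≤ j ∧ j ≤ n ∧ p = j) by omega),
      if_neg (show ¬(1 ≤ j ∧ j ≤ n ∧ q = j) by omega)]
    rcases hs with rfl | rfl <;> rcases ht with rfl | rfl <;> rcases hf with rfl | rfl <;>
      norm_num
  · rw [if_neg (show ¬(1 ≤ i ∧ i ≤ n ∧ p = i) by omega),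
      if_neg (show ¬(1 ≤ i ∧ i ≤ n ∧ q = i) by omega),
      if_pos (show 1 ≤ j ∧ j ≤ n ∧ p = j from ⟨by omega, hjn, h1.symm⟩),
      if_neg (show ¬(1 ≤ j ∧ j ≤ n ∧ q = j) by omega)]
    rcases hs with rfl | rfl <;> rcases ht with rfl | rfl <;> rcases he with rfl | rfl <;>
      norm_num
  · rw [if_neg (show ¬(1 ≤ i ∧ i ≤ n ∧ p = i) by omega),
      if_neg (show ¬(1 ≤ i ∧ i ≤ n ∧ q = i) by omega),
      if_neg (show ¬(1 ≤ j ∧ j ≤ n ∧ p = j) by omega),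
      if_pos (show 1 ≤ j ∧ j ≤ n ∧ q = j from ⟨by omega, hjn, h1.symm⟩)]
    rcases hs with rfl | rfl <;> rcases ht with rfl | rfl <;> rcases he with rfl | rfl <;>
      rcases hf with rfl | rfl <;> norm_num
lemma nroot_mem_Dset {n l i j : ℕ} {s e : ℝ} (h1 : l ≤ i) (h2 : i < j) (h3 : j ≤ n)
    (hs : s = 1 ∨ s = -1) (he : e = 1 ∨ e = -1) : nroot n i j s e ∈ Dset n l :=
  ⟨i, j, s, e, h1, h2, h3, hs, he, rfl⟩
lemma connected_Dset {n l : ℕ} (hl : 1 ≤ l) (h3n : l + 2 ≤ n)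
    {a b : EuclideanSpace ℝ (Fin n)} (ha : a ∈ Dset n l) (hb : b ∈ Dset n l) :
    Relation.ReflTransGen (Linked (Dset n l)) a b := by
  obtain ⟨i, j, s, e, h1, h2, h3, hs, he, rfl⟩ := ha
  obtain ⟨p, q, t, f, g1, g2, g3, ht, hf, rfl⟩ := hb
  have hi1 : 1 ≤ i := le_trans hl h1
  have hp1 : 1 ≤ p := le_trans hl g1
  have hma : nroot n i j s e ∈ Dset n l := nroot_mem_Dset h1 h2 h3 hs he
  have hmb : nroot n p q t f ∈ Dset n l := nroot_mem_Dset g1 g2 g3 ht hf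
  by_cases hip : i = p
  · subst hip
    by_cases hjq : j = q
    · subst hjq
      by_cases hef : e = f
      · subst hef
        refine Relation.ReflTransGen.single ⟨hma, hmb, ?_⟩
        rw [inner_nroot_same hi1 h2 h3]
        rcases hs with rfl | rfl <;> rcases ht with rfl | rfl <;>
          rcases he with rfl | rfl <;> norm_num
      · set k := if l < i then l else if i + 1 < j then i + 1 else j + 1 with hk
        have hkr : l ≤ k ∧ k ≤ n ∧ k ≠ i ∧ k ≠ j := by
          dsimp [k]; split_ifs <;> omega
        rcases lt_or_gt_of_ne hkr.2.2.1 with hki | hki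
        · have hw : nroot n k i 1 1 ∈ Dset n l :=
            nroot_mem_Dset hkr.1 hki (by omega) (Or.inl rfl) (Or.inl rfl)
          refine Relation.ReflTransGen.head ⟨hma, hw, ?_⟩
            (Relation.ReflTransGen.single ⟨hw, hmb, ?_⟩)
          · rw [real_inner_comm]
            exact inner_nroot_overlap (by omega) hki (by omega) hi1 h2 h3
              (Or.inl rfl) (Or.inl rfl) hs he (Or.inr (Or.inr (Or.inl rfl)))
          · exact inner_nroot_overlap (by omega) hki (by omega) hi1 h2 h3
              (Or.inl rfl) (Or.inl rfl) ht hf (Or.inr (Or.inr (Or.inl rfl)))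
        · have hkj : k ≠ j := hkr.2.2.2
          have hw : nroot n i k 1 1 ∈ Dset n l :=
            nroot_mem_Dset h1 hki hkr.2.1 (Or.inl rfl) (Or.inl rfl)
          refine Relation.ReflTransGen.head ⟨hma, hw, ?_⟩
            (Relation.ReflTransGen.single ⟨hw, hmb, ?_⟩)
          · rw [real_inner_comm]
            exact inner_nroot_overlap hi1 hki hkr.2.1 hi1 h2 h3
              (Or.inl rfl) (Or.inl rfl) hs he (Or.inl ⟨rfl, hkj⟩)
          · exact inner_nroot_overlap hi1 hki hkr.2.1 hi1 h2 h3
              (Or.inl rfl) (Or.inl rfl) ht hf (Or.inl ⟨rfl, hkj⟩)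
    · exact Relation.ReflTransGen.single
        ⟨hma, hmb, inner_nroot_overlap hi1 h2 h3 hi1 g2 g3 hs he ht hf (Or.inl ⟨rfl, hjq⟩)⟩
  · by_cases hov : i = q ∨ j = p ∨ j = q
    · rcases hov with h | h | h
      · exact Relation.ReflTransGen.single
          ⟨hma, hmb, inner_nroot_overlap hi1 h2 h3 hp1 g2 g3 hs he ht hf (Or.inr (Or.inl h))⟩
      · exact Relation.ReflTransGen.single
          ⟨hma, hmb, inner_nroot_overlap hi1 h2 h3 hp1 g2 g3 hs he ht hf
            (Or.inr (Or.inr (Or.inl h)))⟩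
      · exact Relation.ReflTransGen.single
          ⟨hma, hmb, inner_nroot_overlap hi1 h2 h3 hp1 g2 g3 hs he ht hf
            (Or.inr (Or.inr (Or.inr ⟨h, hip⟩)))⟩
    · push_neg at hov
      rcases lt_or_gt_of_ne hip with hlt | hlt
      · have hw : nroot n i p 1 1 ∈ Dset n l :=
          nroot_mem_Dset h1 hlt (by omega) (Or.inl rfl) (Or.inl rfl)
        refine Relation.ReflTransGen.head ⟨hma, hw, ?_⟩
          (Relation.ReflTransGen.single ⟨hw, hmb, ?_⟩)
        · rw [real_inner_comm]
          exact inner_nroot_overlap hi1 hlt (by omega) hi1 h2 h3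
            (Or.inl rfl) (Or.inl rfl) hs he (Or.inl ⟨rfl, fun hpj => hov.2.1 hpj.symm⟩)
        · exact inner_nroot_overlap hi1 hlt (by omega) hp1 g2 g3
            (Or.inl rfl) (Or.inl rfl) ht hf (Or.inr (Or.inr (Or.inl rfl)))
      · have hw : nroot n p i 1 1 ∈ Dset n l :=
          nroot_mem_Dset g1 hlt (by omega) (Or.inl rfl) (Or.inl rfl)
        refine Relation.ReflTransGen.head ⟨hma, hw, ?_⟩
          (Relation.ReflTransGen.single ⟨hw, hmb, ?_⟩)
        · rw [real_inner_comm]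
          exact inner_nroot_overlap hp1 hlt (by omega) hi1 h2 h3
            (Or.inl rfl) (Or.inl rfl) hs he (Or.inr (Or.inr (Or.inl rfl)))
        · exact inner_nroot_overlap hp1 hlt (by omega) hp1 g2 g3
            (Or.inl rfl) (Or.inl rfl) ht hf (Or.inl ⟨rfl, fun hiq => hov.1 hiq⟩)
lemma inner_nroot_disjoint {n i j p q : ℕ} {s e t f : ℝ}
    (hi : 1 ≤ i) (hij : i < j) (hjp : j < p) (hpq : p < q) (hqn : q ≤ n) :
    ⟪nroot n i j s e, nroot n p q t f⟫ = 0 := by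
  rw [inner_nroot_nroot,
    if_neg (show ¬(1 ≤ i ∧ i ≤ n ∧ p = i) by omega),
    if_neg (show ¬(1 ≤ i ∧ i ≤ n ∧ q = i) by omega),
    if_neg (show ¬(1 ≤ j ∧ j ≤ n ∧ p = j) by omega),
    if_neg (show ¬(1 ≤ j ∧ j ≤ n ∧ q = j) by omega)]
  ring

/-- An `A₁`-pair `{±root}`. -/
noncomputable def A1 (n i j : ℕ) (e : ℝ) : Set (EuclideanSpace ℝ (Fin n)) :=
  {nroot n i j 1 e, nroot n i j (-1) e}
lemma class_subset {S P : Set V} (hP : ∀ x y, x ∈ P → Linked S x y → y ∈ P) {a : V}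
    (ha : a ∈ P) : {b | Relation.ReflTransGen (Linked S) a b} ⊆ P := by
  intro b hb
  induction hb with
  | refl => exact ha
  | tail h1 h2 ih => exact hP _ _ ih h2
lemma isComponent_Dset {n l : ℕ} (hl : 1 ≤ l) (h3 : l + 2 ≤ n)
    {C : Set (EuclideanSpace ℝ (Fin n))} :
    IsComponent (Dset n l) C ↔ C = Dset n l := by
  have key : ∀ a ∈ Dset n l, {b | Relation.ReflTransGen (Linked (Dset n l)) a b} = Dset n l := by
    intro a ha
    apply Set.Subset.antisymm
    · exact class_subset (fun x y _ h => h.2.1) ha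
    · intro b hb; exact connected_Dset hl h3 ha hb
  constructor
  · rintro ⟨a, ha, rfl⟩; exact key a ha
  · rintro rfl
    have hm : nroot n l (l + 1) 1 1 ∈ Dset n l :=
      nroot_mem_Dset le_rfl (by omega) (by omega) (Or.inl rfl) (Or.inl rfl)
    exact ⟨_, hm, (key _ hm).symm⟩
lemma A1_subsingleton_class {n i j : ℕ} {e : ℝ} {S : Set (EuclideanSpace ℝ (Fin n))}
    (hi : 1 ≤ i) (hij : i < j) (hjn : j ≤ n) (he : e = 1 ∨ e = -1)
    (hsub : A1 n i j e ⊆ S)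
    (hclosed : ∀ x y, x ∈ A1 n i j e → Linked S x y → y ∈ A1 n i j e) :
    ∀ a ∈ A1 n i j e, {b | Relation.ReflTransGen (Linked S) a b} = A1 n i j e := by
  intro a ha
  apply Set.Subset.antisymm
  · exact class_subset hclosed ha
  · have hstep : ∀ (s t : ℝ), s = 1 ∨ s = -1 → t = 1 ∨ t = -1 →
        Relation.ReflTransGen (Linked S) (nroot n i j s e) (nroot n i j t e) := by
      intro s t hs ht
      by_cases hst : s = t
      · subst hst; rfl
      · refine Relation.ReflTransGen.single ⟨hsub ?_, hsub ?_, ?_⟩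
        · rcases hs with rfl | rfl
          · left; rfl
          · right; rfl
        · rcases ht with rfl | rfl
          · left; rfl
          · right; rfl
        · rw [inner_nroot_same hi hij hjn]
          rcases hs with rfl | rfl <;> rcases ht with rfl | rfl <;>
            rcases he with rfl | rfl <;> norm_num
    rintro b hb
    rcases ha with rfl | rfl <;> rcases hb with rfl | rfl
    · exact hstep 1 1 (Or.inl rfl) (Or.inl rfl)
    · exact hstep 1 (-1) (Or.inl rfl) (Or.inr rfl)
    · exact hstep (-1) 1 (Or.inr rfl) (Or.inl rfl)
    · exact hstep (-1) (-1) (Or.inr rfl) (Or.inr rfl)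
lemma orth_Dset {n l : ℕ} (hl : 1 ≤ l) (h3 : l + 2 ≤ n) :
    {α ∈ Dset n l | ⟪α, nroot n l (l + 1) 1 1⟫ = 0}
      = A1 n l (l + 1) (-1) ∪ Dset n (l + 2) := by
  ext v
  constructor
  · rintro ⟨⟨i, j, s, e, h1, h2, h3', hs, he, rfl⟩, horth⟩
    rw [inner_nroot_nroot] at horth
    by_cases hil : i = l
    · subst hil
      rw [if_pos (show 1 ≤ i ∧ i ≤ n ∧ i = i from ⟨by omega, by omega, rfl⟩),
        if_neg (show ¬(1 ≤ i ∧ i ≤ n ∧ i + 1 = i) by omega),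
        if_neg (show ¬(1 ≤ j ∧ j ≤ n ∧ i = j) by omega)] at horth
      by_cases hj : j = i + 1
      · subst hj
        rw [if_pos (show 1 ≤ i + 1 ∧ i + 1 ≤ n ∧ i + 1 = i + 1 from ⟨by omega, by omega, rfl⟩)]
          at horth
        have hs0 : s ≠ 0 := by rcases hs with rfl | rfl <;> norm_num
        have he' : e = -1 := by
          rcases he with rfl | rfl
          · exfalso; apply hs0; nlinarith
          · rfl
        subst he'
        left
        rcases hs with rfl | rfl
        · left; rfl
        · right; rfl
      · rw [if_neg (show ¬(1 ≤ j ∧ j ≤ n ∧ i + 1 = j) by omega)] at horth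
        exfalso
        have hs0 : s ≠ 0 := by rcases hs with rfl | rfl <;> norm_num
        apply hs0; nlinarith
    · by_cases hil1 : i = l + 1
      · exfalso
        rw [if_neg (show ¬(1 ≤ i ∧ i ≤ n ∧ l = i) by omega),
          if_pos (show 1 ≤ i ∧ i ≤ n ∧ l + 1 = i from ⟨by omega, by omega, by omega⟩),
          if_neg (show ¬(1 ≤ j ∧ j ≤ n ∧ l = j) by omega),
          if_neg (show ¬(1 ≤ j ∧ j ≤ n ∧ l + 1 = j) by omega)] at horth
        have hs0 : s ≠ 0 := by rcases hs with rfl | rfl <;> norm_num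
        apply hs0; nlinarith
      · right
        exact ⟨i, j, s, e, by omega, h2, h3', hs, he, rfl⟩
  · rintro (hv | hv)
    · have hv' : ∃ s : ℝ, (s = 1 ∨ s = -1) ∧ v = nroot n l (l + 1) s (-1) := by
        rcases hv with rfl | rfl
        · exact ⟨1, Or.inl rfl, rfl⟩
        · exact ⟨-1, Or.inr rfl, rfl⟩
      obtain ⟨s, hs, rfl⟩ := hv'
      refine ⟨nroot_mem_Dset le_rfl (by omega) (by omega) hs (Or.inr rfl), ?_⟩
      rw [inner_nroot_same hl (by omega) (by omega)]
      ring
    · obtain ⟨i, j, s, e, h1, h2, h3', hs, he, rfl⟩ := hv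
      refine ⟨nroot_mem_Dset (by omega) h2 h3' hs he, ?_⟩
      rw [real_inner_comm]
      exact inner_nroot_disjoint hl (by omega) (by omega) h2 h3'
lemma mem_A1_iff {n i j : ℕ} {e : ℝ} {v : EuclideanSpace ℝ (Fin n)} :
    v ∈ A1 n i j e ↔ ∃ s : ℝ, (s = 1 ∨ s = -1) ∧ v = nroot n i j s e := by
  constructor
  · rintro (rfl | rfl)
    · exact ⟨1, Or.inl rfl, rfl⟩
    · exact ⟨-1, Or.inr rfl, rfl⟩
  · rintro ⟨s, (rfl | rfl), rfl⟩
    · left; rfl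
    · right; rfl
lemma comp_orth_cases {n l : ℕ} (hl : 1 ≤ l) (h3 : l + 2 ≤ n)
    {C : Set (EuclideanSpace ℝ (Fin n))} :
    IsComponent (A1 n l (l + 1) (-1) ∪ Dset n (l + 2)) C ↔
      (C = A1 n l (l + 1) (-1)
       ∨ (l + 4 ≤ n ∧ C = Dset n (l + 2))
       ∨ (l + 3 = n ∧ (C = A1 n (n - 1) n (-1) ∨ C = A1 n (n - 1) n 1))) := by
  set S := A1 n l (l + 1) (-1) ∪ Dset n (l + 2) with hS
  -- the low A1 pair is closed
  have hcl_low : ∀ x y, x ∈ A1 n l (l + 1) (-1) → Linked S x y → y ∈ A1 n l (l + 1) (-1) := by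
    rintro x y hx ⟨hxS, hyS, hinner⟩
    rcases hyS with hy | hy
    · exact hy
    · exfalso
      obtain ⟨s, hs, rfl⟩ := mem_A1_iff.1 hx
      obtain ⟨p, q, t, f, g1, g2, g3, ht, hf, rfl⟩ := hy
      exact hinner (inner_nroot_disjoint hl (by omega) (by omega) g2 g3)
  have hclass_low := A1_subsingleton_class hl (by omega) (by omega) (Or.inr rfl)
    Set.subset_union_left hcl_low
  -- the tail is closed
  have hcl_T : ∀ x y, x ∈ Dset n (l + 2) → Linked S x y → y ∈ Dset n (l + 2) := by
    rintro x y hx ⟨hxS, hyS, hinner⟩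
    rcases hyS with hy | hy
    · exfalso
      obtain ⟨s, hs, rfl⟩ := mem_A1_iff.1 hy
      obtain ⟨p, q, t, f, g1, g2, g3, ht, hf, rfl⟩ := hx
      rw [real_inner_comm] at hinner
      exact hinner (inner_nroot_disjoint hl (by omega) (by omega) g2 g3)
    · exact hy
  constructor
  · rintro ⟨a, ha, rfl⟩
    rcases ha with ha | ha
    · exact Or.inl (hclass_low a ha)
    · by_cases h4 : l + 4 ≤ n
      · refine Or.inr (Or.inl ⟨h4, ?_⟩)
        apply Set.Subset.antisymm
        · exact class_subset hcl_T ha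
        · intro b hb
          exact Relation.ReflTransGen.mono
            (fun x y hxy => ⟨Or.inr hxy.1, Or.inr hxy.2.1, hxy.2.2⟩) _ _ (connected_Dset (by omega) (by omega) ha hb)
      · obtain ⟨i, j, s, e, g1, g2, g3, hs, he, rfl⟩ := ha
        by_cases h5 : l + 3 = n
        · have hi : i = n - 1 := by omega
          have hj : n = j := by omega
          subst hi; subst hj
          refine Or.inr (Or.inr ⟨h5, ?_⟩)
          have hcl_high : ∀ x y, x ∈ A1 n (n - 1) n e → Linked S x y → y ∈ A1 n (n - 1) n e := by
            rintro x y hx ⟨hxS, hyS, hinner⟩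
            obtain ⟨u, hu, rfl⟩ := mem_A1_iff.1 hx
            rcases hyS with hy | hy
            · exfalso
              obtain ⟨w, hw, rfl⟩ := mem_A1_iff.1 hy
              rw [real_inner_comm] at hinner
              exact hinner (inner_nroot_disjoint hl (by omega) (by omega) (by omega) (by omega))
            · obtain ⟨p, q, t, f, k1, k2, k3, ht, hf, rfl⟩ := hy
              have hp : p = n - 1 := by omega
              have hq : n = q := by omega
              subst hp; subst hq
              by_cases hfe : f = e
              · subst hfe; exact mem_A1_iff.2 ⟨t, ht, rfl⟩
              · exfalso
                apply hinner
                rw [inner_nroot_same (by omega) (by omega) (by omega)]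
                rcases he with rfl | rfl <;> rcases hf with rfl | rfl <;>
                  first | (exact absurd rfl hfe) | norm_num
          have hmem : A1 n (n - 1) n e ⊆ S := by
            intro x hx
            obtain ⟨u, hu, rfl⟩ := mem_A1_iff.1 hx
            exact Or.inr (nroot_mem_Dset (by omega) (by omega) (by omega) hu he)
          have := A1_subsingleton_class (show 1 ≤ n - 1 by omega) (by omega) (by omega) he
            hmem hcl_high (nroot n (n - 1) n s e) (mem_A1_iff.2 ⟨s, hs, rfl⟩)
          rcases he with rfl | rfl
          · right; exact this
          · left; exact this
        · omega
  · rintro (rfl | ⟨h4, rfl⟩ | ⟨h5, hC⟩)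
    · refine ⟨nroot n l (l + 1) 1 (-1), Or.inl (Or.inl rfl), ?_⟩
      exact (hclass_low _ (Or.inl rfl)).symm
    · have hm : nroot n (l + 2) (l + 3) 1 1 ∈ Dset n (l + 2) :=
        nroot_mem_Dset le_rfl (by omega) (by omega) (Or.inl rfl) (Or.inl rfl)
      refine ⟨_, Or.inr hm, ?_⟩
      apply (Set.Subset.antisymm ?_ ?_).symm
      · exact class_subset hcl_T hm
      · intro b hb
        exact Relation.ReflTransGen.mono
          (fun x y hxy => ⟨Or.inr hxy.1, Or.inr hxy.2.1, hxy.2.2⟩) _ _ (connected_Dset (by omega) (by omega) hm hb)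
    · have key : ∀ e : ℝ, e = 1 ∨ e = -1 →
          IsComponent S (A1 n (n - 1) n e) := by
        intro e he
        have hcl_high : ∀ x y, x ∈ A1 n (n - 1) n e → Linked S x y → y ∈ A1 n (n - 1) n e := by
          rintro x y hx ⟨hxS, hyS, hinner⟩
          obtain ⟨u, hu, rfl⟩ := mem_A1_iff.1 hx
          rcases hyS with hy | hy
          · exfalso
            obtain ⟨w, hw, rfl⟩ := mem_A1_iff.1 hy
            rw [real_inner_comm] at hinner
            exact hinner (inner_nroot_disjoint hl (by omega) (by omega) (by omega) (by omega))
          · obtain ⟨p, q, t, f, k1, k2, k3, ht, hf, rfl⟩ := hy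
            have hp : p = n - 1 := by omega
            have hq : n = q := by omega
            subst hp; subst hq
            by_cases hfe : f = e
            · subst hfe; exact mem_A1_iff.2 ⟨t, ht, rfl⟩
            · exfalso
              apply hinner
              rw [inner_nroot_same (by omega) (by omega) (by omega)]
              rcases he with rfl | rfl <;> rcases hf with rfl | rfl <;>
                first | (exact absurd rfl hfe) | norm_num
        have hmem : A1 n (n - 1) n e ⊆ S := by
          intro x hx
          obtain ⟨u, hu, rfl⟩ := mem_A1_iff.1 hx
          exact Or.inr (nroot_mem_Dset (by omega) (by omega) (by omega) hu he)
        refine ⟨nroot n (n - 1) n 1 e, hmem (Or.inl rfl), ?_⟩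
        exact (A1_subsingleton_class (show 1 ≤ n - 1 by omega) (by omega) (by omega) he
          hmem hcl_high _ (Or.inl rfl)).symm
      rcases hC with rfl | rfl
      · exact key (-1) (Or.inr rfl)
      · exact key 1 (Or.inl rfl)
lemma nroot_mem_posD {n i j : ℕ} {e : ℝ} (hi : 1 ≤ i) (hij : i < j) (hjn : j ≤ n)
    (he : e = 1 ∨ e = -1) : nroot n i j 1 e ∈ posD n :=
  mem_posD_iff.2 ⟨i, j, e, hi, hij, hjn, he, rfl⟩
lemma posD_sign {n i j : ℕ} {s e : ℝ} (hi : 1 ≤ i) (hij : i < j) (hjn : j ≤ n)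
    (hs : s = 1 ∨ s = -1) (he : e = 1 ∨ e = -1)
    (h : nroot n i j s e ∈ posD n) : s = 1 := by
  obtain ⟨p, q, f, g1, g2, g3, hf, heq⟩ := mem_posD_iff.1 h
  obtain ⟨_, _, hst, _⟩ := nroot_inj hi hij hjn g1 g2 g3 hs he (Or.inl rfl) hf heq
  exact hst
lemma isHighestRoot_Dset {n l : ℕ} (hl : 1 ≤ l) (h3 : l + 2 ≤ n)
    {β : EuclideanSpace ℝ (Fin n)} :
    IsHighestRoot (rootsD n) (posD n) (Dset n l) β ↔ β = nroot n l (l + 1) 1 1 := by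
  constructor
  · rintro ⟨hβC, hβpos, hmax⟩
    obtain ⟨i, j, s, e, h1, h2, h3', hs, he, rfl⟩ := hβC
    have hs1 : s = 1 := posD_sign (by omega) h2 h3' hs he hβpos
    subst hs1
    rcases he with rfl | rfl
    · -- β = ε_i + ε_j ; show i = l and j = l + 1
      by_cases hil : i = l
      · subst hil
        by_cases hjl : j = i + 1
        · subst hjl; rfl
        · exfalso
          have hα : nroot n (i + 1) j 1 (-1) ∈ Dset n i :=
            nroot_mem_Dset (by omega) (by omega) (by omega) (Or.inl rfl) (Or.inr rfl)
          refine hmax _ hα (nroot_mem_posD (by omega) (by omega) (by omega) (Or.inr rfl)) ?_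
          rw [rootsD_eq_Dset]
          have : nroot n i j 1 1 + nroot n (i + 1) j 1 (-1) = nroot n i (i + 1) 1 1 := by
            simp only [nroot]; module
          rw [this]
          exact nroot_mem_Dset (by omega) (by omega) (by omega) (Or.inl rfl) (Or.inl rfl)
      · exfalso
        have hα : nroot n l i 1 (-1) ∈ Dset n l :=
          nroot_mem_Dset le_rfl (by omega) (by omega) (Or.inl rfl) (Or.inr rfl)
        refine hmax _ hα (nroot_mem_posD hl (by omega) (by omega) (Or.inr rfl)) ?_
        rw [rootsD_eq_Dset]
        have : nroot n i j 1 1 + nroot n l i 1 (-1) = nroot n l j 1 1 := by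
          simp only [nroot]; module
        rw [this]
        exact nroot_mem_Dset (by omega) (by omega) (by omega) (Or.inl rfl) (Or.inl rfl)
    · -- β = ε_i - ε_j : contradiction using an index k outside {i, j}
      exfalso
      set k := if l < i then l else if i + 1 < j then i + 1 else j + 1 with hk
      have hkr : l ≤ k ∧ k ≤ n ∧ k ≠ i ∧ k ≠ j := by
        dsimp [k]; split_ifs <;> omega
      rcases Nat.lt_trichotomy k i with hki | hki | hki
      · have hα : nroot n k j 1 1 ∈ Dset n l :=
          nroot_mem_Dset hkr.1 (by omega) (by omega) (Or.inl rfl) (Or.inl rfl)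
        refine hmax _ hα (nroot_mem_posD (by omega) (by omega) (by omega) (Or.inl rfl)) ?_
        rw [rootsD_eq_Dset]
        have : nroot n i j 1 (-1) + nroot n k j 1 1 = nroot n k i 1 1 := by
          simp only [nroot]; module
        rw [this]
        exact nroot_mem_Dset (by omega) (by omega) (by omega) (Or.inl rfl) (Or.inl rfl)
      · exact absurd hki hkr.2.2.1
      · rcases Nat.lt_trichotomy k j with hkj | hkj | hkj
        · have hα : nroot n k j 1 1 ∈ Dset n l :=
            nroot_mem_Dset hkr.1 (by omega) (by omega) (Or.inl rfl) (Or.inl rfl)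
          refine hmax _ hα (nroot_mem_posD (by omega) (by omega) (by omega) (Or.inl rfl)) ?_
          rw [rootsD_eq_Dset]
          have : nroot n i j 1 (-1) + nroot n k j 1 1 = nroot n i k 1 1 := by
            simp only [nroot]; module
          rw [this]
          exact nroot_mem_Dset (by omega) (by omega) (by omega) (Or.inl rfl) (Or.inl rfl)
        · exact absurd hkj hkr.2.2.2
        · have hα : nroot n j k 1 1 ∈ Dset n l :=
            nroot_mem_Dset (by omega) (by omega) (by omega) (Or.inl rfl) (Or.inl rfl)
          refine hmax _ hα (nroot_mem_posD (by omega) (by omega) (by omega) (Or.inl rfl)) ?_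
          rw [rootsD_eq_Dset]
          have : nroot n i j 1 (-1) + nroot n j k 1 1 = nroot n i k 1 1 := by
            simp only [nroot]; module
          rw [this]
          exact nroot_mem_Dset (by omega) (by omega) (by omega) (Or.inl rfl) (Or.inl rfl)
  · rintro rfl
    refine ⟨nroot_mem_Dset le_rfl (by omega) (by omega) (Or.inl rfl) (Or.inl rfl),
      nroot_mem_posD hl (by omega) (by omega) (Or.inl rfl), ?_⟩
    rintro α ⟨i, j, s, e, h1, h2, h3', hs, he, rfl⟩ hαpos hmem
    have hs1 : s = 1 := posD_sign (by omega) h2 h3' hs he hαpos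
    subst hs1
    have hnn : 0 ≤ ⟪nroot n l (l + 1) 1 1, nroot n i j 1 e⟫ := by
      rw [inner_nroot_nroot]
      have hjl : ¬(1 ≤ l ∧ l ≤ n ∧ j = l) := by omega
      rw [if_neg hjl]
      rcases he with rfl | rfl <;> split_ifs <;> norm_num <;> omega
    have h2' : ⟪(nroot n l (l + 1) 1 1 : EuclideanSpace ℝ (Fin n)) + nroot n i j 1 e,
        nroot n l (l + 1) 1 1 + nroot n i j 1 e⟫ = 2 :=
      inner_self_mem_Dset le_rfl (rootsD_eq_Dset n ▸ hmem)
    rw [real_inner_add_add_self,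
      inner_self_nroot hl (by omega) (by omega) (Or.inl rfl) (Or.inl rfl),
      inner_self_nroot (by omega) h2 h3' (Or.inl rfl) he] at h2'
    linarith
lemma isHighestRoot_A1 {n i j : ℕ} {e : ℝ} (hi : 1 ≤ i) (hij : i < j) (hjn : j ≤ n)
    (he : e = 1 ∨ e = -1) {β : EuclideanSpace ℝ (Fin n)} :
    IsHighestRoot (rootsD n) (posD n) (A1 n i j e) β ↔ β = nroot n i j 1 e := by
  constructor
  · rintro ⟨hβC, hβpos, hmax⟩
    obtain ⟨s, hs, rfl⟩ := mem_A1_iff.1 hβC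
    have hs1 : s = 1 := posD_sign hi hij hjn hs he hβpos
    subst hs1; rfl
  · rintro rfl
    refine ⟨Or.inl rfl, nroot_mem_posD hi hij hjn he, ?_⟩
    rintro α hαA hαpos hmem
    obtain ⟨s, hs, rfl⟩ := mem_A1_iff.1 hαA
    have hs1 : s = 1 := posD_sign hi hij hjn hs he hαpos
    subst hs1
    have h2' : ⟪(nroot n i j 1 e : EuclideanSpace ℝ (Fin n)) + nroot n i j 1 e,
        nroot n i j 1 e + nroot n i j 1 e⟫ = 2 :=
      inner_self_mem_Dset le_rfl (rootsD_eq_Dset n ▸ hmem)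
    rw [real_inner_add_add_self, inner_self_nroot hi hij hjn (Or.inl rfl) he] at h2'
    linarith
lemma orth_A1 {n i j : ℕ} {e : ℝ} (hi : 1 ≤ i) (hij : i < j) (hjn : j ≤ n)
    (he : e = 1 ∨ e = -1) :
    {α ∈ A1 n i j e | ⟪α, nroot n i j 1 e⟫ = 0} = (∅ : Set (EuclideanSpace ℝ (Fin n))) := by
  ext v
  simp only [Set.mem_setOf_eq, Set.mem_empty_iff_false, iff_false, not_and]
  rintro hv
  obtain ⟨s, hs, rfl⟩ := mem_A1_iff.1 hv
  rw [inner_nroot_same hi hij hjn]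
  rcases hs with rfl | rfl <;> rcases he with rfl | rfl <;> norm_num
lemma cascadeSub_char {n : ℕ} (hn : 4 ≤ n) {K : Set (EuclideanSpace ℝ (Fin n))}
    (h : CascadeSub (rootsD n) (posD n) K) :
    (∃ l, l % 2 = 1 ∧ l + 2 ≤ n ∧ K = Dset n l)
    ∨ (∃ l, l % 2 = 1 ∧ l + 1 ≤ n ∧ K = A1 n l (l + 1) (-1))
    ∨ (n % 2 = 0 ∧ K = A1 n (n - 1) n 1) := by
  induction h with
  | base C hC =>
    left
    rw [rootsD_eq_Dset] at hC
    exact ⟨1, rfl, by omega, (isComponent_Dset (by omega) (by omega)).1 hC⟩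
  | step K C β hK hβ hC ih =>
    rcases ih with ⟨l, hl2, hln, rfl⟩ | ⟨l, hl2, hln, rfl⟩ | ⟨hn2, rfl⟩
    · have hβ' := (isHighestRoot_Dset (by omega) hln).1 hβ
      subst hβ'
      rw [orth_Dset (by omega) hln] at hC
      rcases (comp_orth_cases (by omega) hln).1 hC with h | ⟨h4, h⟩ | ⟨h5, h⟩
      · right; left; exact ⟨l, hl2, by omega, h⟩
      · left; exact ⟨l + 2, by omega, by omega, h⟩
      · rcases h with h | h
        · right; left
          refine ⟨n - 1, by omega, by omega, ?_⟩
          rw [show n - 1 + 1 = n from by omega, h]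
        · right; right; exact ⟨by omega, h⟩
    · have hβ' := (isHighestRoot_A1 (by omega) (by omega) hln (Or.inr rfl)).1 hβ
      subst hβ'
      rw [orth_A1 (by omega) (by omega) hln (Or.inr rfl)] at hC
      obtain ⟨a, ha, -⟩ := hC
      exact absurd ha (Set.notMem_empty a)
    · have hβ' := (isHighestRoot_A1 (by omega) (by omega) (le_refl n) (Or.inl rfl)).1 hβ
      subst hβ'
      rw [orth_A1 (by omega) (by omega) (le_refl n) (Or.inl rfl)] at hC
      obtain ⟨a, ha, -⟩ := hC
      exact absurd ha (Set.notMem_empty a)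
lemma cascadeSub_Dset {n : ℕ} (hn : 4 ≤ n) :
    ∀ m l, l = 2 * m + 1 → l + 2 ≤ n → CascadeSub (rootsD n) (posD n) (Dset n l) := by
  intro m
  induction m with
  | zero =>
    intro l hl h2
    subst hl
    have h1 := (isComponent_Dset (n := n) (l := 1) (by omega) (by omega)).2 rfl
    nth_rewrite 1 [← rootsD_eq_Dset] at h1
    have h2' : (2 * 0 + 1 : ℕ) = 1 := rfl
    rw [h2']
    exact CascadeSub.base _ h1
  | succ m ih =>
    intro l hl h2
    subst hl
    have hK := ih (2 * m + 1) rfl (by omega)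
    refine CascadeSub.step _ _ _ hK
      ((isHighestRoot_Dset (by omega) (by omega)).2 rfl) ?_
    rw [orth_Dset (by omega) (by omega)]
    refine (comp_orth_cases (by omega) (by omega)).2 (Or.inr (Or.inl ⟨by omega, ?_⟩))
    rw [show 2 * (m + 1) + 1 = 2 * m + 1 + 2 from by omega]
lemma cascadeSub_A1m {n : ℕ} (hn : 4 ≤ n) {l : ℕ} (hl2 : l % 2 = 1) (hln : l + 1 ≤ n) :
    CascadeSub (rootsD n) (posD n) (A1 n l (l + 1) (-1)) := by
  by_cases h : l + 2 ≤ n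
  · have hK := cascadeSub_Dset hn ((l - 1) / 2) l (by omega) h
    refine CascadeSub.step _ _ _ hK
      ((isHighestRoot_Dset (by omega) h).2 rfl) ?_
    rw [orth_Dset (by omega) h]
    exact (comp_orth_cases (by omega) h).2 (Or.inl rfl)
  · have hl' : l + 1 = n := by omega
    have hK := cascadeSub_Dset hn ((l - 3) / 2) (l - 2) (by omega) (by omega)
    refine CascadeSub.step _ _ _ hK
      ((isHighestRoot_Dset (by omega) (by omega)).2 rfl) ?_
    rw [orth_Dset (by omega) (by omega)]
    refine (comp_orth_cases (by omega) (by omega)).2 (Or.inr (Or.inr ⟨by omega, Or.inl ?_⟩))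
    rw [show l = n - 1 from by omega, show n - 1 + 1 = n from by omega]
lemma cascadeSub_A1p {n : ℕ} (hn : 4 ≤ n) (hn2 : n % 2 = 0) :
    CascadeSub (rootsD n) (posD n) (A1 n (n - 1) n 1) := by
  have hK := cascadeSub_Dset hn ((n - 4) / 2) (n - 3) (by omega) (by omega)
  refine CascadeSub.step _ _ _ hK
    ((isHighestRoot_Dset (by omega) (by omega)).2 rfl) ?_
  rw [orth_Dset (by omega) (by omega)]
  exact (comp_orth_cases (by omega) (by omega)).2 (Or.inr (Or.inr ⟨by omega, Or.inr rfl⟩))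

/-- The Kostant cascade of `D_n` (`n ≥ 4`) consists of
`β_i = ε_{2i-1} + ε_{2i}` for `1 ≤ i ≤ ⌊(n-1)/2⌋`, together with
`α_{2i-1} = ε_{2i-1} - ε_{2i}` for `1 ≤ i ≤ (n-1)/2` if `n` is odd; and
additionally `α_n = ε_{n-1} + ε_n`, and the `α_{2i-1}` for `1 ≤ i ≤ n/2`,
if `n` is even. -/
theorem statement_6 (n : ℕ) (hn : 4 ≤ n) :
    cascadeSet (rootsD n) (posD n)
      = {v | ∃ i, 1 ≤ i ∧ i ≤ (n - 1) / 2 ∧ v = eps n (2 * i - 1) + eps n (2 * i)}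
        ∪ {v | ∃ i, 1 ≤ i ∧ i ≤ (if Even n then n / 2 else (n - 1) / 2) ∧
            v = eps n (2 * i - 1) - eps n (2 * i)}
        ∪ {v | Even n ∧ v = eps n (n - 1) + eps n n} := by

  ext v
  simp only [cascadeSet, Set.mem_setOf_eq, Set.mem_union]
  constructor
  · rintro ⟨K, hK, hhr⟩
    rcases cascadeSub_char hn hK with ⟨l, hl2, hln, rfl⟩ | ⟨l, hl2, hln, rfl⟩ | ⟨hn2, rfl⟩
    · left; left
      have hv := (isHighestRoot_Dset (by omega) hln).1 hhr
      refine ⟨(l + 1) / 2, by omega, by omega, ?_⟩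
      rw [hv, show 2 * ((l + 1) / 2) - 1 = l from by omega,
        show 2 * ((l + 1) / 2) = l + 1 from by omega]
      simp only [nroot]; module
    · left; right
      have hv := (isHighestRoot_A1 (by omega) (by omega) hln (Or.inr rfl)).1 hhr
      refine ⟨(l + 1) / 2, by omega, ?_, ?_⟩
      · split_ifs with h <;> rw [Nat.even_iff] at h <;> omega
      · rw [hv, show 2 * ((l + 1) / 2) - 1 = l from by omega,
          show 2 * ((l + 1) / 2) = l + 1 from by omega]
        simp only [nroot]; module
    · right
      have hv := (isHighestRoot_A1 (by omega) (by omega) le_rfl (Or.inl rfl)).1 hhr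
      refine ⟨Nat.even_iff.2 hn2, ?_⟩
      rw [hv]; simp only [nroot]; module
  · rintro ((⟨i, hi1, hi2, rfl⟩ | ⟨i, hi1, hi2, rfl⟩) | ⟨hev, rfl⟩)
    · refine ⟨Dset n (2 * i - 1), cascadeSub_Dset hn (i - 1) (2 * i - 1) (by omega) (by omega),
        (isHighestRoot_Dset (by omega) (by omega)).2 ?_⟩
      rw [show 2 * i - 1 + 1 = 2 * i from by omega]
      simp only [nroot]; module
    · have hb : 2 * i ≤ n := by
        by_cases h : Even n
        · rw [if_pos h] at hi2; rw [Nat.even_iff] at h; omega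
        · rw [if_neg h] at hi2; rw [Nat.even_iff] at h; omega
      refine ⟨A1 n (2 * i - 1) (2 * i - 1 + 1) (-1), cascadeSub_A1m hn (by omega) (by omega),
        (isHighestRoot_A1 (by omega) (by omega) (by omega) (Or.inr rfl)).2 ?_⟩
      rw [show 2 * i - 1 + 1 = 2 * i from by omega]
      simp only [nroot]; module
    · exact ⟨A1 n (n - 1) n 1, cascadeSub_A1p hn (Nat.even_iff.1 hev),
        (isHighestRoot_A1 (by omega) (by omega) le_rfl (Or.inl rfl)).2
          (by simp only [nroot]; module)⟩
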